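/- Let (M,d) be a compact metric space, E : M → ℝ continuous, x₀ ∈ M, and h > 0. Suppose u : (0,h] → M is such that u(s) minimizes v ↦ d²(v, x₀)/(2s) + E(v) over M for every s ∈ (0,h]. Then d²(u(h), x₀)/(2h) + E(u(h)) + ∫_0^h d²(u(s), x₀)/(2s²) ds ≤ E(x₀), where the integral is the Lebesgue integral with values in [0,∞]. -/

import Mathlib

set_option linter.unnecessarySimpa false


open MeasureTheory Filter Topology
open scoped ENNReal

theorem stmt_4 {M : Type*} [MetricSpace M] [CompactSpace M]
    (E : M → ℝ) (hE : Continuous E) (x₀ : M) (h : ℝ) (hh : 0 < h)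
    (u : ℝ → M)
    (hmin : ∀ s : ℝ, 0 < s → s ≤ h → ∀ v : M,
      dist (u s) x₀ ^ 2 / (2 * s) + E (u s) ≤ dist v x₀ ^ 2 / (2 * s) + E v) :
    ((dist (u h) x₀ ^ 2 / (2 * h) + E (u h) : ℝ) : EReal)
      + ((∫⁻ s in Set.Ioc (0 : ℝ) h,
          ENNReal.ofReal (dist (u s) x₀ ^ 2 / (2 * s ^ 2)) : ℝ≥0∞) : EReal)
      ≤ ((E x₀ : ℝ) : EReal) := by
  -- the value function
  set val : ℝ → ℝ := fun s => dist (u s) x₀ ^ 2 / (2 * s) + E (u s) with hval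
  -- val s ≤ E x₀ for s ∈ (0,h]
  have hvle : ∀ s : ℝ, 0 < s → s ≤ h → val s ≤ E x₀ := by
    intro s hs hsh
    have := hmin s hs hsh x₀
    simpa using this
  -- key inequality : for 0 < s ≤ t ≤ h,
  have key : ∀ s t : ℝ, 0 < s → s ≤ t → t ≤ h →
      val t + dist (u s) x₀ ^ 2 * (t - s) / (2 * s * t) ≤ val s := by
    intro s t hs hst hth
    have ht : 0 < t := lt_of_lt_of_le hs hst
    have h1 := hmin t ht hth (u s)
    have heq : dist (u s) x₀ ^ 2 / (2 * t) + dist (u s) x₀ ^ 2 * (t - s) / (2 * s * t)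
        = dist (u s) x₀ ^ 2 / (2 * s) := by
      field_simp
      ring
    calc val t + dist (u s) x₀ ^ 2 * (t - s) / (2 * s * t)
        ≤ (dist (u s) x₀ ^ 2 / (2 * t) + E (u s)) + dist (u s) x₀ ^ 2 * (t - s) / (2 * s * t) :=
          add_le_add_left h1 _
      _ = dist (u s) x₀ ^ 2 / (2 * s) + E (u s) := by rw [add_right_comm, heq]
      _ = val s := rfl
  -- antitonicity of val on (0,h]
  have hval_anti : ∀ s t : ℝ, 0 < s → s ≤ t → t ≤ h → val t ≤ val s := by
    intro s t hs hst hth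
    have ht : 0 < t := lt_of_lt_of_le hs hst
    have hnn : 0 ≤ dist (u s) x₀ ^ 2 * (t - s) / (2 * s * t) :=
      div_nonneg (mul_nonneg (sq_nonneg _) (by linarith)) (by positivity)
    have hk := key s t hs hst hth
    calc val t ≤ val t + dist (u s) x₀ ^ 2 * (t - s) / (2 * s * t) :=
          le_add_of_nonneg_right hnn
      _ ≤ val s := hk
  -- extended value function
  set f : ℝ → ℝ := fun s => if 0 < s then val (min s h) else E x₀ with hf
  have hf_pos : ∀ s : ℝ, 0 < s → f s = val (min s h) := fun s hs => if_pos hs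
  have hf_small : ∀ s : ℝ, 0 < s → s ≤ h → f s = val s := by
    intro s hs hsh; rw [hf_pos s hs, min_eq_left hsh]
  have hf_big : ∀ s : ℝ, h ≤ s → f s = val h := by
    intro s hs; rw [hf_pos s (lt_of_lt_of_le hh hs), min_eq_right hs]
  have hf_anti : Antitone f := by
    intro s t hst
    by_cases hs : 0 < s
    · have ht : 0 < t := lt_of_lt_of_le hs hst
      rw [hf_pos s hs, hf_pos t ht]
      exact hval_anti _ _ (lt_min hs hh) (min_le_min_right h hst) (min_le_right _ _)
    · by_cases ht : 0 < t
      · have h1 : f s = E x₀ := if_neg hs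
        rw [hf_pos t ht, h1]
        exact hvle _ (lt_min ht hh) (min_le_right _ _)
      · have h1 : f s = E x₀ := if_neg hs
        have h2 : f t = E x₀ := if_neg ht
        rw [h1, h2]
  have hf_meas : Measurable f := hf_anti.measurable
  -- bounds on f
  have : Nonempty M := ⟨x₀⟩
  obtain ⟨m, -, hm'⟩ := isCompact_univ.exists_isMinOn
    (Set.univ_nonempty : (Set.univ : Set M).Nonempty) hE.continuousOn
  have hm : ∀ v : M, v ∈ (Set.univ : Set M) → E m ≤ E v := fun v hv => hm' hv
  have hf_ub : ∀ s, f s ≤ E x₀ := by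
    intro s
    by_cases hs : 0 < s
    · rw [hf_pos s hs]; exact hvle _ (lt_min hs hh) (min_le_right _ _)
    · have h1 : f s = E x₀ := if_neg hs
      rw [h1]
  have hf_lb : ∀ s, E m ≤ f s := by
    intro s
    by_cases hs : 0 < s
    · rw [hf_pos s hs]
      have h1 : (0:ℝ) ≤ dist (u (min s h)) x₀ ^ 2 / (2 * min s h) := by
        apply div_nonneg (sq_nonneg _)
        have : (0:ℝ) < min s h := lt_min hs hh
        positivity
      have h2 := hm (u (min s h)) (Set.mem_univ _)
      show E m ≤ dist (u (min s h)) x₀ ^ 2 / (2 * min s h) + E (u (min s h))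
      linarith
    · have h1 : f s = E x₀ := if_neg hs
      rw [h1]; exact hm x₀ (Set.mem_univ _)
  -- any measurable function bounded as f is, is integrable on bounded intervals
  have hbdd : ∀ x, ‖f x‖ ≤ max |E x₀| |E m| := by
    intro x
    rw [Real.norm_eq_abs, abs_le]
    constructor
    · have h1 := hf_lb x
      have h2 : -|E m| ≤ E m := neg_abs_le _
      have h3 : |E m| ≤ max |E x₀| |E m| := le_max_right _ _
      linarith
    · have h1 := hf_ub x
      have h2 : E x₀ ≤ |E x₀| := le_abs_self _
      linarith [le_max_left |E x₀| |E m|]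
  have hf_int : ∀ a b : ℝ, IntegrableOn f (Set.Ioc a b) := by
    intro a b
    refine ⟨hf_meas.aestronglyMeasurable, ?_⟩
    exact HasFiniteIntegral.restrict_of_bounded (C := max |E x₀| |E m|)
      measure_Ioc_lt_top (ae_of_all _ hbdd)
  have hf_ii : ∀ a b : ℝ, IntervalIntegrable f volume a b := fun a b =>
    ⟨hf_int a b, hf_int b a⟩
  -- difference quotient sequence
  set g : ℕ → ℝ → ℝ≥0∞ := fun n s =>
    ENNReal.ofReal ((n + 1 : ℝ) * (f s - f (s + 1 / (n + 1)))) with hg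
  have hg_meas : ∀ n, Measurable (g n) := fun n =>
    ENNReal.measurable_ofReal.comp
      (measurable_const.mul (hf_meas.sub (hf_meas.comp (measurable_id.add_const _))))
  -- integral bound for each n
  have hg_int : ∀ n : ℕ, (∫⁻ s in Set.Ioc (0:ℝ) h, g n s) ≤ ENNReal.ofReal (E x₀ - val h) := by
    intro n
    set ε : ℝ := 1 / (n + 1 : ℝ) with hε
    have hεpos : 0 < ε := by positivity
    have hnonneg : 0 ≤ᵐ[volume.restrict (Set.Ioc (0:ℝ) h)]
        fun s => (n + 1 : ℝ) * (f s - f (s + ε)) := by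
      apply ae_of_all
      intro s
      have h1 : f (s + ε) ≤ f s := hf_anti (by linarith)
      have h2 : (0:ℝ) ≤ (n:ℝ) + 1 := by positivity
      have : 0 ≤ f s - f (s + ε) := by linarith
      positivity
    have htrans_int : IntegrableOn (fun s => f (s + ε)) (Set.Ioc (0:ℝ) h) := by
      refine ⟨(hf_meas.comp (measurable_id.add_const _)).aestronglyMeasurable, ?_⟩
      exact HasFiniteIntegral.restrict_of_bounded (C := max |E x₀| |E m|)
        measure_Ioc_lt_top (ae_of_all _ fun x => hbdd (x + ε))
    have hint : Integrable (fun s => (n + 1 : ℝ) * (f s - f (s + ε)))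
        (volume.restrict (Set.Ioc (0:ℝ) h)) :=
      (Integrable.sub (hf_int 0 h) htrans_int).const_mul _
    rw [← ofReal_integral_eq_lintegral_ofReal hint hnonneg]
    apply ENNReal.ofReal_le_ofReal
    -- compute the integral
    have hsplit : ∫ s in Set.Ioc (0:ℝ) h, (n + 1 : ℝ) * (f s - f (s + ε))
        = (n + 1 : ℝ) * ((∫ s in Set.Ioc (0:ℝ) h, f s) - ∫ s in Set.Ioc (0:ℝ) h, f (s + ε)) := by
      rw [integral_const_mul, integral_sub (hf_int 0 h) htrans_int]
    have tr : ∫ s in Set.Ioc (0:ℝ) h, f (s + ε) = ∫ s in Set.Ioc ε (h + ε), f s := by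
      rw [← intervalIntegral.integral_of_le hh.le, ← intervalIntegral.integral_of_le
        (by linarith : ε ≤ h + ε)]
      have := intervalIntegral.integral_comp_add_right (a := (0:ℝ)) (b := h) f ε
      simpa using this
    -- interval integral manipulation
    have hadd1 : (∫ s in (0:ℝ)..ε, f s) + ∫ s in ε..(h+ε), f s = ∫ s in (0:ℝ)..(h+ε), f s :=
      intervalIntegral.integral_add_adjacent_intervals (hf_ii 0 ε) (hf_ii ε (h+ε))
    have hadd2 : (∫ s in (0:ℝ)..h, f s) + ∫ s in h..(h+ε), f s = ∫ s in (0:ℝ)..(h+ε), f s :=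
      intervalIntegral.integral_add_adjacent_intervals (hf_ii 0 h) (hf_ii h (h+ε))
    have hconst : ∫ s in h..(h+ε), f s = ε * val h := by
      rw [intervalIntegral.integral_of_le (by linarith : h ≤ h + ε)]
      rw [setIntegral_congr_fun measurableSet_Ioc
        (fun x hx => hf_big x (le_of_lt hx.1))]
      rw [setIntegral_const, Real.volume_real_Ioc_of_le (by linarith), smul_eq_mul]
      have : h + ε - h = ε := by ring
      rw [this]
    have hsmall : ∫ s in (0:ℝ)..ε, f s ≤ ε * E x₀ := by
      have := intervalIntegral.integral_mono_on hεpos.le (hf_ii 0 ε)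
        (intervalIntegrable_const (c := E x₀)) (fun x _ => hf_ub x)
      simpa using this
    have hmain : (∫ s in Set.Ioc (0:ℝ) h, f s) - (∫ s in Set.Ioc ε (h + ε), f s)
        ≤ ε * (E x₀ - val h) := by
      rw [← intervalIntegral.integral_of_le hh.le,
        ← intervalIntegral.integral_of_le (by linarith : ε ≤ h + ε)]
      have : (∫ s in (0:ℝ)..h, f s) - (∫ s in ε..(h+ε), f s)
          = (∫ s in (0:ℝ)..ε, f s) - ∫ s in h..(h+ε), f s := by linarith
      rw [this, hconst]
      linarith
    rw [hsplit, tr]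
    calc (n + 1 : ℝ) * ((∫ s in Set.Ioc (0:ℝ) h, f s) - ∫ s in Set.Ioc ε (h + ε), f s)
        ≤ (n + 1 : ℝ) * (ε * (E x₀ - val h)) := by
          apply mul_le_mul_of_nonneg_left hmain (by positivity)
      _ = E x₀ - val h := by
          rw [hε]; field_simp
  -- pointwise liminf bound
  have hpt : ∀ s ∈ Set.Ioo (0:ℝ) h,
      ENNReal.ofReal (dist (u s) x₀ ^ 2 / (2 * s ^ 2)) ≤ liminf (fun n => g n s) atTop := by
    intro s hs
    obtain ⟨hs0, hsh⟩ := hs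
    -- for large n, s + 1/(n+1) ≤ h
    have hev : ∀ᶠ n : ℕ in atTop,
        ENNReal.ofReal (dist (u s) x₀ ^ 2 / (2 * s * (s + 1 / (n+1)))) ≤ g n s := by
      have h1 : Tendsto (fun n : ℕ => s + 1 / ((n:ℝ) + 1)) atTop (𝓝 (s + 0)) :=
        tendsto_const_nhds.add (tendsto_one_div_add_atTop_nhds_zero_nat)
      rw [add_zero] at h1
      filter_upwards [h1.eventually_le_const hsh] with n hn
      set ε : ℝ := 1 / ((n:ℝ) + 1) with hε
      have hεpos : 0 < ε := by positivity
      have hsε : 0 < s + ε := by linarith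
      apply ENNReal.ofReal_le_ofReal
      -- f s - f (s+ε) ≥ dist^2 * ε / (2 s (s+ε))
      have hk := key s (s + ε) hs0 (by linarith) hn
      rw [← hf_small s hs0 hsh.le, ← hf_small (s + ε) hsε hn] at hk
      have harith : dist (u s) x₀ ^ 2 * (s + ε - s) / (2 * s * (s + ε))
          = ε * (dist (u s) x₀ ^ 2 / (2 * s * (s + ε))) := by
        field_simp
        ring
      rw [harith] at hk
      have h2 : dist (u s) x₀ ^ 2 / (2 * s * (s + ε)) ≤ ((n:ℝ)+1) * (f s - f (s + ε)) := by
        have h3 : ε * (dist (u s) x₀ ^ 2 / (2 * s * (s + ε))) ≤ f s - f (s + ε) := by linarith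
        have h4 := mul_le_mul_of_nonneg_left h3 (by positivity : (0:ℝ) ≤ (n:ℝ)+1)
        have h5 : ((n:ℝ)+1) * ε = 1 := by rw [hε]; field_simp
        calc dist (u s) x₀ ^ 2 / (2 * s * (s + ε))
            = ((n:ℝ)+1) * ε * (dist (u s) x₀ ^ 2 / (2 * s * (s + ε))) := by rw [h5]; ring
          _ = ((n:ℝ)+1) * (ε * (dist (u s) x₀ ^ 2 / (2 * s * (s + ε)))) := by ring
          _ ≤ ((n:ℝ)+1) * (f s - f (s + ε)) := h4
      exact h2
    -- take liminf
    have hlim : Tendsto (fun n : ℕ =>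
        ENNReal.ofReal (dist (u s) x₀ ^ 2 / (2 * s * (s + 1 / (n+1))))) atTop
        (𝓝 (ENNReal.ofReal (dist (u s) x₀ ^ 2 / (2 * s ^ 2)))) := by
      apply (ENNReal.continuous_ofReal.tendsto _).comp
      have h1 : Tendsto (fun n : ℕ => s + 1 / ((n:ℝ) + 1)) atTop (𝓝 (s + 0)) :=
        tendsto_const_nhds.add (tendsto_one_div_add_atTop_nhds_zero_nat)
      rw [add_zero] at h1
      have h2 : Tendsto (fun n : ℕ => 2 * s * (s + 1 / ((n:ℝ)+1))) atTop (𝓝 (2 * s * s)) :=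
        tendsto_const_nhds.mul h1
      have h3 := (tendsto_const_nhds (x := dist (u s) x₀ ^ 2)).div h2 (by positivity)
      convert h3 using 2
      · rfl
      · ring
    calc ENNReal.ofReal (dist (u s) x₀ ^ 2 / (2 * s ^ 2))
        = liminf (fun n : ℕ =>
            ENNReal.ofReal (dist (u s) x₀ ^ 2 / (2 * s * (s + 1 / (n+1))))) atTop :=
          (hlim.liminf_eq).symm
      _ ≤ liminf (fun n => g n s) atTop := liminf_le_liminf hev
  -- put everything together via Fatou
  have hL : (∫⁻ s in Set.Ioc (0:ℝ) h,
      ENNReal.ofReal (dist (u s) x₀ ^ 2 / (2 * s ^ 2)))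
      ≤ ENNReal.ofReal (E x₀ - val h) := by
    have hae : ∀ᵐ s ∂(volume.restrict (Set.Ioc (0:ℝ) h)),
        ENNReal.ofReal (dist (u s) x₀ ^ 2 / (2 * s ^ 2)) ≤ liminf (fun n => g n s) atTop := by
      have hmem : ∀ᵐ s ∂(volume.restrict (Set.Ioc (0:ℝ) h)), s ∈ Set.Ioc (0:ℝ) h :=
        ae_restrict_mem measurableSet_Ioc
      have hne : ∀ᵐ s ∂(volume.restrict (Set.Ioc (0:ℝ) h)), s ≠ h := by
        refine ae_restrict_of_ae ?_
        rw [ae_iff]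
        simp only [ne_eq, not_not]
        rw [Set.setOf_eq_eq_singleton]
        exact measure_singleton h
      filter_upwards [hmem, hne] with s hs hsne
      exact hpt s ⟨hs.1, lt_of_le_of_ne hs.2 hsne⟩
    calc (∫⁻ s in Set.Ioc (0:ℝ) h, ENNReal.ofReal (dist (u s) x₀ ^ 2 / (2 * s ^ 2)))
        ≤ ∫⁻ s in Set.Ioc (0:ℝ) h, liminf (fun n => g n s) atTop := lintegral_mono_ae hae
      _ ≤ liminf (fun n => ∫⁻ s in Set.Ioc (0:ℝ) h, g n s) atTop := lintegral_liminf_le hg_meas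
      _ ≤ liminf (fun _ : ℕ => ENNReal.ofReal (E x₀ - val h)) atTop :=
          liminf_le_liminf (Eventually.of_forall hg_int)
      _ = ENNReal.ofReal (E x₀ - val h) := liminf_const _
  -- final EReal computation
  have hvalh : val h ≤ E x₀ := hvle h hh le_rfl
  have hEq : ((dist (u h) x₀ ^ 2 / (2 * h) + E (u h) : ℝ) : EReal) = ((val h : ℝ) : EReal) := rfl
  rw [hEq]
  have hcast : ((ENNReal.ofReal (E x₀ - val h) : ℝ≥0∞) : EReal) = ((E x₀ - val h : ℝ) : EReal) := by
    rw [EReal.coe_ennreal_ofReal]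
    congr 1
    exact max_eq_left (by linarith)
  calc ((val h : ℝ) : EReal) + ((∫⁻ s in Set.Ioc (0 : ℝ) h,
          ENNReal.ofReal (dist (u s) x₀ ^ 2 / (2 * s ^ 2)) : ℝ≥0∞) : EReal)
      ≤ ((val h : ℝ) : EReal) + ((ENNReal.ofReal (E x₀ - val h) : ℝ≥0∞) : EReal) := by
        apply add_le_add_right
        exact_mod_cast hL
    _ = ((val h : ℝ) : EReal) + ((E x₀ - val h : ℝ) : EReal) := by rw [hcast]
    _ = ((E x₀ : ℝ) : EReal) := by
        rw [← EReal.coe_add]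
        congr 1
        ring
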